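/- Let T be an operator function on Ω in the complex Hilbert space H. Then for every ε > 0 one has W_ε(T) = {λ ∈ Ω : ∃ f ∈ dom T(λ), ‖f‖ = 1, |⟨T(λ)f, f⟩| < ε}. Consequently, the pseudo numerical range satisfies W_Ψ(T) = {λ ∈ Ω : 0 ∈ closure(W(T(λ)))}. -/

import Mathlib

open Filter Topology

noncomputable section

variable {H : Type*} [NormedAddCommGroup H] [InnerProductSpace ℂ H] [CompleteSpace H]

local notation "⟪" x ", " y "⟫" => @inner ℂ _ _ x y

/-- The numerical range of a single (possibly unbounded) linear operator `S`,
`W(S) = {⟨Sf, f⟩ : f ∈ dom S, ‖f‖ = 1}` (the paper's inner product `⟨u, v⟩` is linear in `u`,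
i.e. it is Mathlib's `⟪v, u⟫`). -/
def opNumRange (S : H →ₗ.[ℂ] H) : Set ℂ :=
  {z | ∃ f : S.domain, ‖(f : H)‖ = 1 ∧ ⟪(f : H), S f⟫ = z}

/-- The perturbation of a partially defined operator by a bounded operator,
on the unchanged domain. -/
def pert (S : H →ₗ.[ℂ] H) (B : H →L[ℂ] H) : H →ₗ.[ℂ] H :=
  ⟨S.domain, S.toFun + B.toLinearMap.comp S.domain.subtype⟩

/-- The numerical range of an operator function `T` on `Ω`. -/
def Wfun (Ω : Set ℂ) (T : ℂ → H →ₗ.[ℂ] H) : Set ℂ :=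
  {l | l ∈ Ω ∧ ∃ f : (T l).domain, ‖(f : H)‖ = 1 ∧ ⟪(f : H), (T l) f⟫ = 0}

/-- The `ε`-pseudo numerical range `W_ε(T) = ⋃_{‖B‖<ε} W(T+B)`. -/
def Weps (Ω : Set ℂ) (T : ℂ → H →ₗ.[ℂ] H) (ε : ℝ) : Set ℂ :=
  ⋃ (B : H →L[ℂ] H) (_ : ‖B‖ < ε), Wfun Ω (fun l => pert (T l) B)

/-- The pseudo numerical range `W_Ψ(T) = ⋂_{ε>0} W_ε(T)`. -/
def Wpsi (Ω : Set ℂ) (T : ℂ → H →ₗ.[ℂ] H) : Set ℂ := ⋂ ε > 0, Weps Ω T ε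

/-- For every `ε > 0`,
`W_ε(T) = {λ ∈ Ω : ∃ f ∈ dom T(λ), ‖f‖ = 1, |⟨T(λ)f, f⟩| < ε}`, and consequently
`W_Ψ(T) = {λ ∈ Ω : 0 ∈ closure (W(T(λ)))}`. -/
theorem pseudoNumRange_characterization (Ω : Set ℂ) (T : ℂ → H →ₗ.[ℂ] H) :
    (∀ ε > (0 : ℝ), Weps Ω T ε =
      {l | l ∈ Ω ∧ ∃ f : (T l).domain, ‖(f : H)‖ = 1 ∧
        ‖⟪(f : H), (T l) f⟫‖ < ε}) ∧
    Wpsi Ω T = {l | l ∈ Ω ∧ (0 : ℂ) ∈ closure (opNumRange (T l))} := by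
  have pert_apply : ∀ (S : H →ₗ.[ℂ] H) (B : H →L[ℂ] H) (f : S.domain),
      pert S B f = S f + B (f : H) := fun S B f => rfl
  have key : ∀ ε > (0 : ℝ), Weps Ω T ε =
      {l | l ∈ Ω ∧ ∃ f : (T l).domain, ‖(f : H)‖ = 1 ∧
        ‖⟪(f : H), (T l) f⟫‖ < ε} := by
    intro ε hε
    ext l
    simp only [Weps, Set.mem_iUnion, Wfun, Set.mem_setOf_eq]
    constructor
    · rintro ⟨B, hB, hΩ, f, hf, hz⟩
      refine ⟨hΩ, f, hf, ?_⟩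
      change ⟪(f : H), (T l) f + B (f : H)⟫ = 0 at hz
      have heq : ⟪(f : H), (T l) f⟫ = -⟪(f : H), B (f : H)⟫ := by
        rw [inner_add_right] at hz; linear_combination hz
      calc ‖⟪(f : H), (T l) f⟫‖ = ‖⟪(f : H), B (f : H)⟫‖ := by
            rw [heq]; simp
        _ ≤ ‖(f : H)‖ * ‖B (f : H)‖ := norm_inner_le_norm _ _
        _ ≤ ‖(f : H)‖ * (‖B‖ * ‖(f : H)‖) := by
            gcongr; exact B.le_opNorm _
        _ = ‖B‖ := by rw [hf]; ring
        _ < ε := hB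
    · rintro ⟨hΩ, f, hf, hz⟩
      set z := ⟪(f : H), (T l) f⟫ with hzdef
      refine ⟨(-z) • ContinuousLinearMap.id ℂ H, ?_, hΩ, f, hf, ?_⟩
      · calc ‖(-z) • ContinuousLinearMap.id ℂ H‖
            ≤ ‖-z‖ * ‖ContinuousLinearMap.id ℂ H‖ := norm_smul_le _ _
          _ ≤ ‖-z‖ * 1 := by gcongr; exact ContinuousLinearMap.norm_id_le
          _ = ‖z‖ := by rw [mul_one, norm_neg]
          _ < ε := hz
      · rw [pert_apply, inner_add_right]
        have h1 : ⟪(f : H), (f : H)⟫ = (1 : ℂ) := by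
          rw [inner_self_eq_norm_sq_to_K, hf]; norm_num
        simp only [ContinuousLinearMap.smul_apply, ContinuousLinearMap.id_apply,
          inner_smul_right, h1]
        ring
  refine ⟨key, ?_⟩
  ext l
  simp only [Wpsi, Set.mem_iInter, Set.mem_setOf_eq]
  constructor
  · intro h
    have h1 := h 1 one_pos
    rw [key 1 one_pos] at h1
    refine ⟨h1.1, ?_⟩
    rw [Metric.mem_closure_iff]
    intro ε hε
    have hε' := h ε hε
    rw [key ε hε] at hε'
    obtain ⟨-, f, hf, hz⟩ := hε'
    exact ⟨⟪(f : H), (T l) f⟫, ⟨f, hf, rfl⟩, by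
      simpa [dist_eq_norm] using hz⟩
  · rintro ⟨hΩ, hcl⟩ ε hε
    rw [key ε hε]
    rw [Metric.mem_closure_iff] at hcl
    obtain ⟨w, ⟨f, hf, hw⟩, hdist⟩ := hcl ε hε
    refine ⟨hΩ, f, hf, ?_⟩
    rw [hw]
    simpa [dist_eq_norm] using hdist

end
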